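/- Suppose ‖g − ∇φ(x)‖ ≤ τ ‖g‖ for some τ ≥ 0, let d := B⁻¹g, α > 0, θ ∈ (0,1), x⁺ := x − α d, and let f, f⁺ ∈ ℝ satisfy |f − φ(x)| + |f⁺ − φ(x⁺)| ≤ 2ε_f for some ε_f ≥ 0. If f⁺ ≤ f − α θ ⟨d, g⟩ + 2ε_f, then φ(x⁺) − φ(x) ≤ −(α θ σ_lb/(1 + τ)²) ‖∇φ(x)‖² + 4ε_f. -/

import Mathlib

open scoped RealInnerProductSpace
open Matrix

theorem quadlb {n : ℕ} (B : Matrix (Fin n) (Fin n) ℝ) (hB : B.IsHermitian) (hPD : B.PosDef)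
    (σubB : ℝ) (heig : ∀ i, hB.eigenvalues i ≤ σubB)
    (g : EuclideanSpace ℝ (Fin n)) :
    (1/σubB) * ‖g‖^2 ≤ ⟪Matrix.toEuclideanLin B⁻¹ g, g⟫ := by
  classical
  set b := hB.eigenvectorBasis with hb
  have hlampos : ∀ i, 0 < hB.eigenvalues i := hPD.eigenvalues_pos
  have hunit : IsUnit B.det := hPD.det_pos.ne'.isUnit
  have hTb : ∀ i, Matrix.toEuclideanLin B⁻¹ (b i) = (hB.eigenvalues i)⁻¹ • b i := by
    intro i
    have h1 : B *ᵥ ⇑(b i) = hB.eigenvalues i • ⇑(b i) := hB.mulVec_eigenvectorBasis i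
    have h2 : B⁻¹ *ᵥ (B *ᵥ ⇑(b i)) = ⇑(b i) := by
      rw [Matrix.mulVec_mulVec, Matrix.nonsing_inv_mul _ hunit, Matrix.one_mulVec]
    rw [h1] at h2
    have h3 : B⁻¹ *ᵥ ⇑(b i) = (hB.eigenvalues i)⁻¹ • ⇑(b i) := by
      rw [Matrix.mulVec_smul] at h2
      have := congrArg (fun v => (hB.eigenvalues i)⁻¹ • v) h2
      simpa [smul_smul, inv_mul_cancel₀ (hlampos i).ne'] using this
    apply (WithLp.equiv 2 _).injective
    ext j
    simpa [Matrix.toEuclideanLin_apply] using congrFun h3 j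
  have hTg : Matrix.toEuclideanLin B⁻¹ g
      = ∑ i, ((hB.eigenvalues i)⁻¹ * b.repr g i) • b i := by
    conv_lhs => rw [← b.sum_repr g]
    rw [map_sum]
    congr 1; ext i
    rw [LinearMap.map_smul, hTb i, smul_smul, mul_comm]
  have hinner : ⟪Matrix.toEuclideanLin B⁻¹ g, g⟫ =
      ∑ i, (hB.eigenvalues i)⁻¹ * (b.repr g i)^2 := by
    rw [hTg, sum_inner]
    congr 1; ext i
    rw [real_inner_smul_left, ← b.repr_apply_apply g i]; ring
  have hnorm : ‖g‖^2 = ∑ i, (b.repr g i)^2 := by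
    rw [← real_inner_self_eq_norm_sq]
    nth_rewrite 1 [← b.sum_repr g]
    rw [sum_inner]
    congr 1; ext i
    rw [real_inner_smul_left, ← b.repr_apply_apply g i]; ring
  rw [hinner, hnorm, Finset.mul_sum]
  apply Finset.sum_le_sum
  intro i _
  have h4 : (1/σubB) ≤ (hB.eigenvalues i)⁻¹ := by
    rw [one_div]
    exact inv_anti₀ (hlampos i) (heig i)
  nlinarith [sq_nonneg (b.repr g i)]

/-- case 1 of Claim 3 in the proof of Proposition 4.4: if
`‖g − ∇φ(x)‖ ≤ τ ‖g‖` and the sufficient-decrease test holds, then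
`φ(x⁺) − φ(x) ≤ −(α θ σlb/(1 + τ)²) ‖∇φ(x)‖² + 4ε_f`. -/
theorem stmt6 {n : ℕ} (hn : 1 ≤ n)
    (φ : EuclideanSpace ℝ (Fin n) → ℝ) (hφ : ContDiff ℝ 1 φ)
    (B : Matrix (Fin n) (Fin n) ℝ) (hB : B.IsHermitian) (hPD : B.PosDef)
    (σlbB σubB σlb σub : ℝ) (h0 : 0 < σlbB) (hord : σlbB ≤ σubB)
    (heig : ∀ i, σlbB ≤ hB.eigenvalues i ∧ hB.eigenvalues i ≤ σubB)
    (hσlb : σlb = 1 / σubB) (hσub : σub = 1 / σlbB)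
    (x g : EuclideanSpace ℝ (Fin n))
    (τ : ℝ) (hτ : 0 ≤ τ)
    (hg : ‖g - gradient φ x‖ ≤ τ * ‖g‖)
    (α : ℝ) (hα0 : 0 < α) (θ : ℝ) (hθ : θ ∈ Set.Ioo (0 : ℝ) 1)
    (εf : ℝ) (hεf : 0 ≤ εf) (f fplus : ℝ)
    (hnoise : |f - φ x| + |fplus - φ (x - α • Matrix.toEuclideanLin B⁻¹ g)| ≤ 2 * εf)
    (hsucc : fplus ≤ f - α * θ * ⟪Matrix.toEuclideanLin B⁻¹ g, g⟫ + 2 * εf) :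
    φ (x - α • Matrix.toEuclideanLin B⁻¹ g) - φ x ≤
      -(α * θ * σlb / (1 + τ) ^ 2) * ‖gradient φ x‖ ^ 2 + 4 * εf := by
  obtain ⟨hθ0, hθ1⟩ := hθ
  set xp := x - α • Matrix.toEuclideanLin B⁻¹ g with hxp
  set G := gradient φ x with hG
  have hub : 0 < σubB := lt_of_lt_of_le h0 hord
  -- step A: decrease bound in terms of the inner product
  have habs1 : φ xp - fplus ≤ |fplus - φ xp| := by
    rw [abs_sub_comm]; exact le_abs_self _
  have habs2 : f - φ x ≤ |f - φ x| := le_abs_self _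
  have hA : φ xp - φ x ≤ -(α * θ * ⟪Matrix.toEuclideanLin B⁻¹ g, g⟫) + 4 * εf := by
    nlinarith [abs_nonneg (f - φ x), abs_nonneg (fplus - φ xp)]
  -- step B: quadratic form lower bound
  have hquad : (1/σubB) * ‖g‖^2 ≤ ⟪Matrix.toEuclideanLin B⁻¹ g, g⟫ :=
    quadlb B hB hPD σubB (fun i => (heig i).2) g
  -- step C: gradient vs g norms
  have hGg : ‖G‖ ≤ (1 + τ) * ‖g‖ := by
    calc ‖G‖ = ‖g - (g - G)‖ := by congr 1; abel
    _ ≤ ‖g‖ + ‖g - G‖ := norm_sub_le _ _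
    _ ≤ ‖g‖ + τ * ‖g‖ := by exact add_le_add_right hg _
    _ = (1 + τ) * ‖g‖ := by ring
  have hGg2 : ‖G‖^2 ≤ (1 + τ)^2 * ‖g‖^2 := by
    have h := mul_self_le_mul_self (norm_nonneg G) hGg
    nlinarith [norm_nonneg g, norm_nonneg G]
  -- combine
  have hσlb0 : 0 < σlb := by rw [hσlb]; positivity
  have hτ1 : (0:ℝ) < (1 + τ)^2 := by positivity
  have hkey : σlb / (1 + τ)^2 * ‖G‖^2 ≤ ⟪Matrix.toEuclideanLin B⁻¹ g, g⟫ := by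
    have h1 : σlb / (1 + τ)^2 * ‖G‖^2 ≤ σlb / (1 + τ)^2 * ((1 + τ)^2 * ‖g‖^2) := by
      apply mul_le_mul_of_nonneg_left hGg2 (by positivity)
    have h2 : σlb / (1 + τ)^2 * ((1 + τ)^2 * ‖g‖^2) = σlb * ‖g‖^2 := by
      field_simp
    rw [hσlb] at *
    calc 1/σubB / (1 + τ)^2 * ‖G‖^2 ≤ 1/σubB * ‖g‖^2 := by rw [← h2]; exact h1
    _ ≤ _ := hquad
  have hαθ : 0 < α * θ := mul_pos hα0 hθ0
  have h5 := mul_le_mul_of_nonneg_left hkey hαθ.le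
  have heq : α * θ * (σlb / (1 + τ) ^ 2 * ‖G‖ ^ 2)
      = (α * θ * σlb / (1 + τ) ^ 2) * ‖G‖ ^ 2 := by ring
  linarith [h5, hA, heq.ge, heq.le]
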